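/- Let l, m₁, ρ, a be real numbers with l > 0, m₁ > 0, ρ > 0, a > 0 and let 0 < b₁ < l. For v ≥ 0 let Λ(v) = sInf {λ : ℝ | λ > 0 ∧ g_v(λ) = 0}, where g_v(λ) = sin(λl)/λ − (m₁/ρ)·(a² + v²)·sin(λb₁)·sin(λ(l−b₁)). Then for all 0 ≤ v₁ < v₂ one has Λ(v₂) < Λ(v₁); that is, the first eigenvalue (and hence the first natural frequency) of the dynamical system with one moving load strictly decreases as the controlled speed parameter v increases. -/

import Mathlib

open Real Set

noncomputable def gfun (l b₁ c lam : ℝ) : ℝ :=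
  Real.sin (lam * l) / lam - c * Real.sin (lam * b₁) * Real.sin (lam * (l - b₁))

lemma gfun_continuousOn (l b₁ c : ℝ) : ContinuousOn (gfun l b₁ c) {lam : ℝ | lam ≠ 0} := by
  apply ContinuousOn.sub
  · exact ContinuousOn.div (Continuous.continuousOn (by continuity))
      continuousOn_id (fun x hx => hx)
  · exact Continuous.continuousOn (by continuity)

/-- near 0, gfun is positive -/
lemma gfun_pos_near_zero (l b₁ c : ℝ) (hl : 0 < l) :
    ∃ ε > 0, ∀ x ∈ Ioc (0:ℝ) ε, 0 < gfun l b₁ c x := by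
  have hslope : Filter.Tendsto (fun t : ℝ => Real.sin t / t) (nhdsWithin 0 {(0:ℝ)}ᶜ)
      (nhds 1) := by
    have h := (hasDerivAt_iff_tendsto_slope).1 (Real.hasDerivAt_sin 0)
    rw [Real.cos_zero] at h
    apply h.congr
    intro t
    rw [slope_def_field]
    simp
  have hmap : Filter.Tendsto (fun x : ℝ => x * l) (nhdsWithin 0 (Ioi (0:ℝ)))
      (nhdsWithin 0 {(0:ℝ)}ᶜ) := by
    apply tendsto_nhdsWithin_of_tendsto_nhds_of_eventually_within
    · have : Filter.Tendsto (fun x : ℝ => x * l) (nhds 0) (nhds (0 * l)) :=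
        (continuous_id.mul continuous_const).tendsto 0
      rw [zero_mul] at this
      exact this.mono_left nhdsWithin_le_nhds
    · filter_upwards [self_mem_nhdsWithin] with x hx
      simp only [mem_Ioi] at hx
      simp only [mem_compl_iff, mem_singleton_iff]
      positivity
  have h1 : Filter.Tendsto (fun x : ℝ => Real.sin (x * l) / x) (nhdsWithin 0 (Ioi (0:ℝ)))
      (nhds l) := by
    have h2 : Filter.Tendsto (fun x : ℝ => (Real.sin (x * l) / (x * l)) * l)
        (nhdsWithin 0 (Ioi (0:ℝ))) (nhds (1 * l)) :=
      ((hslope.comp hmap).mul tendsto_const_nhds)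
    rw [one_mul] at h2
    apply h2.congr'
    filter_upwards [self_mem_nhdsWithin] with x hx
    simp only [mem_Ioi] at hx
    field_simp
  have h3 : Filter.Tendsto (fun x : ℝ => gfun l b₁ c x) (nhdsWithin 0 (Ioi (0:ℝ)))
      (nhds l) := by
    have h4 : Filter.Tendsto (fun x : ℝ => c * Real.sin (x * b₁) * Real.sin (x * (l - b₁)))
        (nhdsWithin 0 (Ioi (0:ℝ))) (nhds 0) := by
      have : Continuous (fun x : ℝ => c * Real.sin (x * b₁) * Real.sin (x * (l - b₁))) := by
        continuity
      have h5 := (this.tendsto 0).mono_left (nhdsWithin_le_nhds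
        (s := Ioi (0:ℝ)) (a := (0:ℝ)))
      simpa using h5
    have := h1.sub h4
    rw [sub_zero] at this
    exact this
  have hev : ∀ᶠ x in nhdsWithin 0 (Ioi (0:ℝ)), 0 < gfun l b₁ c x :=
    h3.eventually (eventually_gt_nhds hl)
  rw [Filter.Eventually, mem_nhdsGT_iff_exists_Ioc_subset] at hev
  obtain ⟨ε, hε, hsub⟩ := hev
  exact ⟨ε, hε, fun x hx => hsub hx⟩

/-- root of gfun strictly below any point where gfun is negative -/
lemma gfun_exists_root_lt (l b₁ c t : ℝ) (hl : 0 < l) (ht : 0 < t)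
    (hneg : gfun l b₁ c t < 0) :
    ∃ r, 0 < r ∧ r < t ∧ gfun l b₁ c r = 0 := by
  obtain ⟨ε, hε, hpos⟩ := gfun_pos_near_zero l b₁ c hl
  set ε' := min ε (t / 2) with hε'def
  have hε'0 : 0 < ε' := lt_min hε (by linarith)
  have hε't : ε' < t := lt_of_le_of_lt (min_le_right _ _) (by linarith)
  have hgε' : 0 < gfun l b₁ c ε' :=
    hpos ε' ⟨hε'0, min_le_left _ _⟩
  have hcont : ContinuousOn (gfun l b₁ c) (Icc ε' t) := by
    apply (gfun_continuousOn l b₁ c).mono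
    intro x hx
    have : 0 < x := lt_of_lt_of_le hε'0 hx.1
    exact ne_of_gt this
  have h0 : (0:ℝ) ∈ Ioo (gfun l b₁ c t) (gfun l b₁ c ε') := ⟨hneg, hgε'⟩
  have := intermediate_value_Ioo' (le_of_lt hε't) hcont h0
  obtain ⟨r, hr, hr0⟩ := this
  exact ⟨r, lt_trans hε'0 hr.1, hr.2, hr0⟩

/-- gfun is negative at π / l -/
lemma gfun_neg_at (l b₁ c : ℝ) (hl : 0 < l) (hb₁ : 0 < b₁) (hb₁l : b₁ < l) (hc : 0 < c) :
    gfun l b₁ c (π / l) < 0 := by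
  have hπl : 0 < π / l := div_pos Real.pi_pos hl
  have h1 : (π / l) * l = π := by field_simp
  have hs1 : 0 < Real.sin ((π / l) * b₁) := by
    apply Real.sin_pos_of_pos_of_lt_pi
    · positivity
    · rw [div_mul_eq_mul_div, div_lt_iff₀ hl]
      nlinarith [Real.pi_pos]
  have hs2 : 0 < Real.sin ((π / l) * (l - b₁)) := by
    apply Real.sin_pos_of_pos_of_lt_pi
    · have : 0 < l - b₁ := by linarith
      positivity
    · rw [div_mul_eq_mul_div, div_lt_iff₀ hl]
      nlinarith [Real.pi_pos]
  unfold gfun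
  rw [h1, Real.sin_pi, zero_div, zero_sub, neg_lt, neg_zero]
  positivity

/-- The set of positive roots -/
def rootSet (l b₁ c : ℝ) : Set ℝ := {lam : ℝ | lam > 0 ∧ gfun l b₁ c lam = 0}

lemma rootSet_props (l b₁ c : ℝ) (hl : 0 < l) (hb₁ : 0 < b₁) (hb₁l : b₁ < l) (hc : 0 < c) :
    sInf (rootSet l b₁ c) ∈ rootSet l b₁ c ∧ sInf (rootSet l b₁ c) < π / l := by
  obtain ⟨ε, hε, hpos⟩ := gfun_pos_near_zero l b₁ c hl
  obtain ⟨r, hr0, hrt, hrz⟩ := gfun_exists_root_lt l b₁ c (π / l) hl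
    (div_pos Real.pi_pos hl) (gfun_neg_at l b₁ c hl hb₁ hb₁l hc)
  have hne : (rootSet l b₁ c).Nonempty := ⟨r, hr0, hrz⟩
  have hbdd : BddBelow (rootSet l b₁ c) := ⟨0, fun x hx => le_of_lt hx.1⟩
  have hset : rootSet l b₁ c = Ici ε ∩ (gfun l b₁ c) ⁻¹' {0} := by
    ext x
    constructor
    · rintro ⟨hx0, hxz⟩
      refine ⟨?_, hxz⟩
      by_contra h
      rw [mem_Ici, not_le] at h
      have := hpos x ⟨hx0, le_of_lt h⟩
      linarith [this, hxz.le]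
    · rintro ⟨hx0, hxz⟩
      exact ⟨lt_of_lt_of_le hε hx0, hxz⟩
  have hclosed : IsClosed (rootSet l b₁ c) := by
    rw [hset]
    apply ContinuousOn.preimage_isClosed_of_isClosed
    · apply (gfun_continuousOn l b₁ c).mono
      intro x hx
      exact ne_of_gt (lt_of_lt_of_le hε hx)
    · exact isClosed_Ici
    · exact isClosed_singleton
  have hmem : sInf (rootSet l b₁ c) ∈ rootSet l b₁ c := hclosed.csInf_mem hne hbdd
  refine ⟨hmem, ?_⟩
  calc sInf (rootSet l b₁ c) ≤ r := csInf_le hbdd ⟨hr0, hrz⟩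
    _ < π / l := hrt

/-- The first eigenvalue of the dynamical system with one moving load strictly
decreases as the controlled speed parameter `v` increases. -/
theorem first_eigenvalue_strictly_decreasing_in_speed
    (l m₁ ρ a b₁ : ℝ) (hl : 0 < l) (hm : 0 < m₁) (hρ : 0 < ρ) (ha : 0 < a)
    (hb₁ : 0 < b₁) (hb₁l : b₁ < l)
    (Λ : ℝ → ℝ)
    (hΛ : ∀ v : ℝ, Λ v = sInf {lam : ℝ | lam > 0 ∧
      Real.sin (lam * l) / lam
        - (m₁ / ρ) * (a ^ 2 + v ^ 2) * Real.sin (lam * b₁) * Real.sin (lam * (l - b₁))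
      = 0}) :
    ∀ v₁ v₂ : ℝ, 0 ≤ v₁ → v₁ < v₂ → Λ v₂ < Λ v₁ := by
  intro v₁ v₂ hv₁ hv₁₂
  set c₁ := (m₁ / ρ) * (a ^ 2 + v₁ ^ 2) with hc₁def
  set c₂ := (m₁ / ρ) * (a ^ 2 + v₂ ^ 2) with hc₂def
  have hmρ : 0 < m₁ / ρ := div_pos hm hρ
  have hc₁ : 0 < c₁ := by positivity
  have hc₁₂ : c₁ < c₂ := by
    apply mul_lt_mul_of_pos_left _ hmρ
    have : v₁ ^ 2 < v₂ ^ 2 := by nlinarith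
    linarith
  have hc₂ : 0 < c₂ := lt_trans hc₁ hc₁₂
  have hΛeq : ∀ v : ℝ, Λ v = sInf (rootSet l b₁ ((m₁ / ρ) * (a ^ 2 + v ^ 2))) := by
    intro v
    rw [hΛ v]
    congr 1
  obtain ⟨⟨hlam1pos, hlam1z⟩, hlam1lt⟩ := rootSet_props l b₁ c₁ hl hb₁ hb₁l hc₁
  set lam1 := sInf (rootSet l b₁ c₁) with hlam1def
  -- at lam1, the product of sines is positive
  have hs1 : 0 < Real.sin (lam1 * b₁) := by
    apply Real.sin_pos_of_pos_of_lt_pi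
    · positivity
    · have h1 : lam1 * b₁ < lam1 * l := by nlinarith
      have h2 : lam1 * l < π := by
        rw [lt_div_iff₀ hl] at hlam1lt
        linarith
      linarith
  have hs2 : 0 < Real.sin (lam1 * (l - b₁)) := by
    apply Real.sin_pos_of_pos_of_lt_pi
    · have : 0 < l - b₁ := by linarith
      positivity
    · have h1 : lam1 * (l - b₁) ≤ lam1 * l := by nlinarith
      have h2 : lam1 * l < π := by
        rw [lt_div_iff₀ hl] at hlam1lt
        linarith
      linarith
  -- gfun with c₂ is negative at lam1
  have hneg : gfun l b₁ c₂ lam1 < 0 := by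
    have : gfun l b₁ c₂ lam1 = gfun l b₁ c₁ lam1
        - (c₂ - c₁) * Real.sin (lam1 * b₁) * Real.sin (lam1 * (l - b₁)) := by
      unfold gfun; ring
    rw [this, hlam1z, zero_sub, neg_lt, neg_zero]
    have hc : 0 < c₂ - c₁ := by linarith
    positivity
  obtain ⟨r, hr0, hrlt, hrz⟩ := gfun_exists_root_lt l b₁ c₂ lam1 hl hlam1pos hneg
  have hbdd₂ : BddBelow (rootSet l b₁ c₂) := ⟨0, fun x hx => le_of_lt hx.1⟩
  have : sInf (rootSet l b₁ c₂) ≤ r := csInf_le hbdd₂ ⟨hr0, hrz⟩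
  rw [hΛeq v₁, hΛeq v₂]
  calc sInf (rootSet l b₁ ((m₁ / ρ) * (a ^ 2 + v₂ ^ 2))) ≤ r := this
    _ < lam1 := hrlt
    _ = sInf (rootSet l b₁ ((m₁ / ρ) * (a ^ 2 + v₁ ^ 2))) := rfl
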